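/- Let h ∈ ℕ with h ≥ 1, and let X be a finite set with |X| ≥ 2, together with a function g : X → ℝ^h such that ‖g(x)‖ ≤ √h (Euclidean norm) for all x ∈ X. Then there exist distinct x, x' ∈ X such that ‖g(x) − g(x')‖ ≤ 4√h · (|X|^{1/h} − 1)^{−1}. -/

import Mathlib

/-- Packing argument: among at least two points of norm at most `√h` in `ℝ^h`,
two distinct ones are at distance at most `4√h · (|X|^(1/h) − 1)⁻¹`. -/
theorem exists_close_pair {α : Type*} (h : ℕ) (hh : 1 ≤ h)
    (X : Finset α) (hX : 2 ≤ X.card)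
    (g : α → EuclideanSpace ℝ (Fin h))
    (hg : ∀ x ∈ X, ‖g x‖ ≤ Real.sqrt h) :
    ∃ x ∈ X, ∃ x' ∈ X, x ≠ x' ∧
      ‖g x - g x'‖ ≤ 4 * Real.sqrt h * ((X.card : ℝ) ^ (1 / (h : ℝ)) - 1)⁻¹ := by
  by_contra hcon
  push_neg at hcon
  have hh0 : (0:ℝ) < h := by exact_mod_cast hh
  have hs : (0:ℝ) < Real.sqrt h := Real.sqrt_pos.mpr hh0
  set c : ℝ := (X.card : ℝ) ^ (1 / (h : ℝ)) with hc_def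
  have hc : 1 < c := by
    have h1 : (1:ℝ) < X.card := by exact_mod_cast Nat.lt_of_lt_of_le one_lt_two hX
    exact (Real.one_lt_rpow_iff_of_pos (by positivity)).mpr (Or.inl ⟨h1, by positivity⟩)
  set δ : ℝ := 2 * Real.sqrt h / (c - 1) with hδ_def
  have hδ : 0 < δ := by
    apply div_pos (by positivity) (by linarith)
  have hbound : 4 * Real.sqrt h * (c - 1)⁻¹ = 2 * δ := by
    field_simp [hδ_def]; ring
  -- pairwise disjoint balls
  have hdisj : (↑X : Set α).Pairwise (Function.onFun Disjoint fun x => Metric.ball (g x) δ) := by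
    intro x hx y hy hxy
    simp only [Function.onFun]
    apply Metric.ball_disjoint_ball
    have := hcon x hx y hy hxy
    rw [hbound] at this
    rw [dist_eq_norm]
    linarith
  -- union contained in big ball
  have hsub : (⋃ x ∈ X, Metric.ball (g x) δ) ⊆ Metric.ball (0 : EuclideanSpace ℝ (Fin h)) (Real.sqrt h + δ) := by
    intro y hy
    simp only [Set.mem_iUnion, Metric.mem_ball] at hy ⊢
    obtain ⟨x, hx, hxy⟩ := hy
    have h2 : ‖y‖ ≤ ‖y - g x‖ + ‖g x‖ := by
      simpa using norm_add_le (y - g x) (g x)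
    have h3 : ‖y - g x‖ < δ := by rwa [← dist_eq_norm]
    rw [dist_zero_right]
    linarith [hg x hx]
  -- measure computation
  haveI : Nonempty (Fin h) := ⟨⟨0, hh⟩⟩
  have hmeas := MeasureTheory.measure_biUnion_finset hdisj
    (fun x _ => Metric.isOpen_ball.measurableSet)
    (μ := MeasureTheory.volume)
  have hle : MeasureTheory.volume (⋃ x ∈ X, Metric.ball (g x) δ)
      ≤ MeasureTheory.volume (Metric.ball (0 : EuclideanSpace ℝ (Fin h)) (Real.sqrt h + δ)) :=
    MeasureTheory.measure_mono hsub
  rw [hmeas] at hle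
  simp only [EuclideanSpace.volume_ball, Fintype.card_fin] at hle
  rw [Finset.sum_const, nsmul_eq_mul] at hle
  set C : ℝ := Real.sqrt Real.pi ^ h / Real.Gamma (h / 2 + 1) with hC_def
  have hC : 0 < C := by
    apply div_pos (by positivity)
    exact Real.Gamma_pos_of_pos (by positivity)
  -- convert to real inequality
  have hreal : (X.card : ℝ) * (δ ^ h * C) ≤ (Real.sqrt h + δ) ^ h * C := by
    rw [← ENNReal.ofReal_le_ofReal_iff (by positivity)] at *
    calc ENNReal.ofReal ((X.card : ℝ) * (δ ^ h * C))
        = (X.card : ENNReal) * (ENNReal.ofReal δ ^ h * ENNReal.ofReal C) := by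
          rw [ENNReal.ofReal_mul (by positivity), ENNReal.ofReal_mul (by positivity),
            ENNReal.ofReal_pow hδ.le, ENNReal.ofReal_natCast]
    _ ≤ ENNReal.ofReal (Real.sqrt h + δ) ^ h * ENNReal.ofReal C := hle
    _ = ENNReal.ofReal ((Real.sqrt h + δ) ^ h * C) := by
          rw [ENNReal.ofReal_mul (by positivity), ENNReal.ofReal_pow (by positivity)]
  have hreal2 : (X.card : ℝ) * δ ^ h ≤ (Real.sqrt h + δ) ^ h := by
    rw [← mul_assoc] at hreal
    exact le_of_mul_le_mul_right hreal hC
  -- take h-th roots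
  have hroot : c * δ ≤ Real.sqrt h + δ := by
    have h1 : ((X.card : ℝ) * δ ^ h) ^ (1 / (h : ℝ)) ≤ ((Real.sqrt h + δ) ^ h) ^ (1 / (h : ℝ)) :=
      Real.rpow_le_rpow (by positivity) hreal2 (by positivity)
    have hne : (h : ℝ) ≠ 0 := ne_of_gt hh0
    rw [Real.mul_rpow (by positivity) (by positivity), ← Real.rpow_natCast δ h,
      ← Real.rpow_natCast (Real.sqrt h + δ) h, ← Real.rpow_mul hδ.le,
      ← Real.rpow_mul (by positivity), mul_one_div, div_self hne, Real.rpow_one,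
      Real.rpow_one] at h1
    exact h1
  have h9 : c - 1 ≠ 0 := by linarith
  have : (c - 1) * δ = 2 * Real.sqrt h := by
    rw [hδ_def, mul_div_assoc', mul_comm, mul_div_assoc, div_self h9, mul_one]
  nlinarith
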